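/- Parallel decoupling iteration: suppose for every level-$k$ index $a$ and every $N^{k+1}L$-square $Q_{k+1}$ one has $\|g_{k,a}\|_{L^p(w_{Q_{k+1}})}^2 \leq C_3 \sum_{b \in A_{k+1,a}} \|g_{k+1,b}\|_{L^p(w_{Q_{k+1}})}^2$, that for every $N^kL$-square $Q_k$ one has $\big(\sum_{S \in \mathcal{T}(Q_k)}\|g\|_{L^p(w_S)}^p\big)^{1/p} \leq C_2^k\big(\sum_{a\in A_k}\|g_{k,a}\|_{L^p(w_{Q_k})}^2\big)^{1/2}$, and that $\sum_{Q_k \in \mathcal{J}} w_{Q_k} \leq C_4 w_{Q_{k+1}}$ for any tiling $\mathcal{J}$ of an $N^{k+1}L$-square $Q_{k+1}$ by $N^kL$-squares. Then for $2 \leq p < \infty$ and $C_2 = C_3^{1/2}C_4^{1/p}$, $\big(\sum_{S \in \mathcal{T}(Q_{k+1})}\|g\|_{L^p(w_S)}^p\big)^{1/p} \leq C_2^{k+1}\big(\sum_{b \in A_{k+1}}\|g_{k+1,b}\|_{L^p(w_{Q_{k+1}})}^2\big)^{1/2}$. -/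

import Mathlib

open MeasureTheory Set
open scoped ENNReal NNReal

/-- The `L`-square indexed by `n ∈ ℤ²`. -/
def sqTile (L : ℝ) (n : ℤ × ℤ) : Set (ℝ × ℝ) :=
  Set.Icc ((L * n.1, L * n.2) : ℝ × ℝ) (L * n.1 + L, L * n.2 + L)

/-- The standard weight of the `L`-square indexed by `n ∈ ℤ²`. -/
noncomputable def sqWeight (L : ℝ) (n : ℤ × ℤ) (x : ℝ × ℝ) : ℝ :=
  (1 + Real.sqrt (((x.1 - (L * n.1 + L / 2)) / L) ^ 2 +
      ((x.2 - (L * n.2 + L / 2)) / L) ^ 2)) ^ (-(100 : ℝ))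

/-- Weighted `L^p` norm over the weight of the `L`-square indexed by `n`. -/
noncomputable def sqNorm (p L : ℝ) (n : ℤ × ℤ) (g : ℝ × ℝ → ℂ) : ℝ≥0∞ :=
  (∫⁻ x, (‖g x‖₊ : ℝ≥0∞) ^ p * ENNReal.ofReal (sqWeight L n x)) ^ (1 / p)

lemma my_ediv_eq_iff {d n m : ℤ} (hd : 0 < d) :
    n / d = m ↔ d * m ≤ n ∧ n + 1 ≤ d * (m + 1) := by
  constructor
  · rintro rfl
    have h1 := Int.mul_ediv_add_emod n d
    have h2 := Int.emod_nonneg n (ne_of_gt hd)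
    have h3 := Int.emod_lt_of_pos n hd
    have h4 : d * (n / d + 1) = d * (n / d) + d := by ring
    constructor <;> linarith
  · rintro ⟨h1, h2⟩
    have hlt : n - d * m < d := by nlinarith
    have hrep : n = (n - d * m) + d * m := by ring
    rw [hrep, Int.add_mul_ediv_left _ m (ne_of_gt hd),
      Int.ediv_eq_zero_of_lt (by linarith) hlt, zero_add]

lemma my_ediv_ediv {d₁ d₂ : ℤ} (h₁ : 0 < d₁) (h₂ : 0 < d₂) (n : ℤ) :
    n / d₁ / d₂ = n / (d₁ * d₂) := by
  obtain ⟨hm1, hm2⟩ := (my_ediv_eq_iff (mul_pos h₁ h₂)).mp (rfl : n / (d₁*d₂) = _)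
  rw [my_ediv_eq_iff h₂]
  constructor
  · rw [Int.le_ediv_iff_mul_le h₁]; nlinarith
  · have : n / d₁ < d₂ * (n / (d₁ * d₂) + 1) := by
      rw [Int.ediv_lt_iff_lt_mul h₁]; nlinarith
    linarith

lemma my_sqTile_subset_iff {a : ℝ} (ha : 0 < a) {d : ℕ} (hd : 0 < d) (n m : ℤ × ℤ) :
    sqTile a n ⊆ sqTile ((d : ℝ) * a) m ↔
      n.1 / (d : ℤ) = m.1 ∧ n.2 / (d : ℤ) = m.2 := by
  have hd' : (0:ℤ) < (d:ℤ) := by exact_mod_cast hd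
  have key : ∀ ni mi : ℤ, ((d:ℝ) * a * mi ≤ a * ni ∧ a * ni + a ≤ (d:ℝ) * a * mi + d * a)
      ↔ ((d:ℤ) * mi ≤ ni ∧ ni + 1 ≤ d * (mi + 1)) := by
    intro ni mi
    constructor
    · rintro ⟨h1, h2⟩
      constructor
      · have : ((d * mi : ℤ) : ℝ) ≤ ((ni : ℤ) : ℝ) := by
          apply le_of_mul_le_mul_left _ ha
          push_cast; nlinarith
        exact_mod_cast this
      · have : ((ni + 1 : ℤ) : ℝ) ≤ ((d * (mi + 1) : ℤ) : ℝ) := by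
          apply le_of_mul_le_mul_left _ ha
          push_cast; nlinarith
        exact_mod_cast this
    · rintro ⟨h1, h2⟩
      have h1' : ((d : ℝ) * mi) ≤ (ni : ℝ) := by exact_mod_cast h1
      have h2' : ((ni : ℝ) + 1) ≤ (d : ℝ) * ((mi : ℝ) + 1) := by exact_mod_cast h2
      constructor
      · nlinarith
      · nlinarith
  unfold sqTile
  rw [Set.Icc_subset_Icc_iff (by rw [Prod.mk_le_mk]; constructor <;> simp <;> linarith),
    Prod.mk_le_mk, Prod.mk_le_mk, my_ediv_eq_iff hd', my_ediv_eq_iff hd',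
    ← key n.1 m.1, ← key n.2 m.2]
  tauto

lemma my_tile_finite {a : ℝ} (ha : 0 < a) {d : ℕ} (hd : 0 < d) (m : ℤ × ℤ) :
    {n : ℤ × ℤ | sqTile a n ⊆ sqTile ((d : ℝ) * a) m}.Finite := by
  have hd' : (0:ℤ) < (d:ℤ) := by exact_mod_cast hd
  apply Set.Finite.subset ((Set.finite_Icc ((d:ℤ)*m.1) ((d:ℤ)*(m.1+1))).prod
    (Set.finite_Icc ((d:ℤ)*m.2) ((d:ℤ)*(m.2+1))))
  intro n hn
  rw [Set.mem_setOf_eq, my_sqTile_subset_iff ha hd] at hn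
  obtain ⟨h1, h2⟩ := hn
  obtain ⟨h11, h12⟩ := (my_ediv_eq_iff hd').mp h1
  obtain ⟨h21, h22⟩ := (my_ediv_eq_iff hd').mp h2
  exact ⟨⟨h11, by linarith⟩, ⟨h21, by linarith⟩⟩

lemma my_sqWeight_nonneg (L : ℝ) (n : ℤ × ℤ) (x : ℝ × ℝ) : 0 ≤ sqWeight L n x :=
  Real.rpow_nonneg (by positivity) _

lemma my_minkowski {κ ι' : Type*} [Fintype ι'] (s : Finset κ) (f : κ → ι' → ℝ≥0∞)
    {q : ℝ} (hq : 1 ≤ q) :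
    (∑ i, (∑ a ∈ s, f a i) ^ q) ^ (1/q) ≤ ∑ a ∈ s, (∑ i, f a i ^ q) ^ (1/q) := by
  induction s using Finset.cons_induction with
  | empty =>
    have h1 : ((0:ℝ≥0∞)) ^ q = 0 := ENNReal.zero_rpow_of_pos (lt_of_lt_of_le one_pos hq)
    have h2 : ((0:ℝ≥0∞)) ^ (1/q) = 0 :=
      ENNReal.zero_rpow_of_pos (one_div_pos.mpr (lt_of_lt_of_le one_pos hq))
    simp only [Finset.sum_empty, h1, Finset.sum_const_zero, h2, le_refl]
  | cons a s ha ih =>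
    simp only [Finset.sum_cons]
    calc (∑ i, (f a i + ∑ b ∈ s, f b i) ^ q) ^ (1/q)
        ≤ (∑ i, f a i ^ q) ^ (1/q) + (∑ i, (∑ b ∈ s, f b i) ^ q) ^ (1/q) :=
          ENNReal.Lp_add_le _ _ _ hq
      _ ≤ _ := add_le_add (le_refl _) ih

lemma my_sum_lintegral_le {α κ : Type*} [MeasurableSpace α] {μ : Measure α}
    (s : Finset κ) (f : κ → α → ℝ≥0∞) :
    ∑ i ∈ s, ∫⁻ x, f i x ∂μ ≤ ∫⁻ x, ∑ i ∈ s, f i x ∂μ := by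
  induction s using Finset.cons_induction with
  | empty => simp
  | cons a s ha ih =>
    simp only [Finset.sum_cons]
    calc ∫⁻ x, f a x ∂μ + ∑ i ∈ s, ∫⁻ x, f i x ∂μ
        ≤ ∫⁻ x, f a x ∂μ + ∫⁻ x, ∑ i ∈ s, f i x ∂μ := add_le_add (le_refl _) ih
      _ ≤ _ := le_lintegral_add _ _

def my_equiv {L : ℝ} (hL : 0 < L) {N : ℕ} (hN : 0 < N) (k : ℕ) (m : ℤ × ℤ) :
    {n : ℤ × ℤ // sqTile L n ⊆ sqTile ((N : ℝ) ^ (k + 1) * L) m} ≃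
      (Σ m' : {n : ℤ × ℤ // sqTile ((N : ℝ) ^ k * L) n ⊆ sqTile ((N : ℝ) ^ (k + 1) * L) m},
        {n : ℤ × ℤ // sqTile L n ⊆ sqTile ((N : ℝ) ^ k * L) m'.1}) := by
  have hNkL : (0:ℝ) < (N : ℝ) ^ k * L := by positivity
  have hdk : (0:ℤ) < ((N ^ k : ℕ) : ℤ) := by positivity
  have hdN : (0:ℤ) < ((N : ℕ) : ℤ) := by exact_mod_cast hN
  have hA : ∀ n : ℤ × ℤ, sqTile L n ⊆ sqTile ((N : ℝ) ^ (k + 1) * L) m ↔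
      n.1 / ((N ^ (k+1) : ℕ) : ℤ) = m.1 ∧ n.2 / ((N ^ (k+1) : ℕ) : ℤ) = m.2 := by
    intro n
    rw [show (N : ℝ) ^ (k + 1) * L = ((N ^ (k+1) : ℕ) : ℝ) * L by push_cast; ring]
    exact my_sqTile_subset_iff hL (pow_pos hN _) n m
  have hB : ∀ m' n : ℤ × ℤ, sqTile L n ⊆ sqTile ((N : ℝ) ^ k * L) m' ↔
      n.1 / ((N ^ k : ℕ) : ℤ) = m'.1 ∧ n.2 / ((N ^ k : ℕ) : ℤ) = m'.2 := by
    intro m' n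
    rw [show (N : ℝ) ^ k * L = ((N ^ k : ℕ) : ℝ) * L by push_cast; ring]
    exact my_sqTile_subset_iff hL (pow_pos hN _) n m'
  have hT : ∀ n : ℤ × ℤ, sqTile ((N : ℝ) ^ k * L) n ⊆ sqTile ((N : ℝ) ^ (k + 1) * L) m ↔
      n.1 / ((N : ℕ) : ℤ) = m.1 ∧ n.2 / ((N : ℕ) : ℤ) = m.2 := by
    intro n
    rw [show (N : ℝ) ^ (k + 1) * L = ((N : ℕ) : ℝ) * ((N : ℝ) ^ k * L) by push_cast; ring]
    exact my_sqTile_subset_iff hNkL hN n m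
  have hcomp : ∀ j : ℤ, j / ((N ^ k : ℕ) : ℤ) / ((N : ℕ) : ℤ) = j / ((N ^ (k+1) : ℕ) : ℤ) := by
    intro j
    rw [my_ediv_ediv hdk hdN,
      show ((N ^ k : ℕ) : ℤ) * ((N : ℕ) : ℤ) = ((N ^ (k+1) : ℕ) : ℤ) by push_cast; ring]
  exact
  { toFun := fun y =>
      ⟨⟨(y.1.1 / ((N ^ k : ℕ) : ℤ), y.1.2 / ((N ^ k : ℕ) : ℤ)), by
          rw [hT]
          obtain ⟨h1, h2⟩ := (hA y.1).mp y.2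
          exact ⟨by rw [hcomp, h1], by rw [hcomp, h2]⟩⟩,
        ⟨y.1, (hB _ y.1).mpr ⟨rfl, rfl⟩⟩⟩
    invFun := fun x => ⟨x.2.1, x.2.2.trans x.1.2⟩
    left_inv := fun y => rfl
    right_inv := by
      rintro ⟨⟨m', hm'⟩, ⟨n, hn⟩⟩
      obtain ⟨h1, h2⟩ := (hB m' n).mp hn
      have hm : (n.1 / ((N ^ k : ℕ) : ℤ), n.2 / ((N ^ k : ℕ) : ℤ)) = m' := by
        rw [h1, h2]
      cases hm
      rfl }

/-- parallel decoupling iteration.  Given the one-step decoupling of each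
`g_{k,a}` into its children (H1), the level-`k` decoupling on `N^k L`-squares (H2), and the
weight summation bound (H3), the level-`k+1` decoupling holds on `N^{k+1}L`-squares with
constant `C₂^{k+1}` where `C₂ = C₃^{1/2} C₄^{1/p}`. -/
theorem stmt_15 (p L : ℝ) (hp : 2 ≤ p) (hL : 0 < L) (N : ℕ) (hN : 2 ≤ N) (k : ℕ)
    (ι : Type) [DecidableEq ι] (Ak Ak1 : Finset ι) (π : ι → ι)
    (hπ : ∀ b ∈ Ak1, π b ∈ Ak)
    (g : ℝ × ℝ → ℂ) (gk gk1 : ι → ℝ × ℝ → ℂ)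
    (hg : ∀ x, g x = ∑ a ∈ Ak, gk a x)
    (hgk : ∀ a ∈ Ak, ∀ x, gk a x = ∑ b ∈ Ak1.filter (fun b => π b = a), gk1 b x)
    (C₂ C₃ C₄ : ℝ) (hC₃ : 0 < C₃) (hC₄ : 0 < C₄)
    (hC₂ : C₂ = C₃ ^ (1/2 : ℝ) * C₄ ^ (1 / p))
    (H1 : ∀ a ∈ Ak, ∀ m : ℤ × ℤ,
      sqNorm p ((N : ℝ) ^ (k + 1) * L) m (gk a) ^ (2 : ℝ) ≤
        ENNReal.ofReal C₃ * ∑ b ∈ Ak1.filter (fun b => π b = a),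
          sqNorm p ((N : ℝ) ^ (k + 1) * L) m (gk1 b) ^ (2 : ℝ))
    (H2 : ∀ m : ℤ × ℤ,
      (∑' n : {n : ℤ × ℤ // sqTile L n ⊆ sqTile ((N : ℝ) ^ k * L) m},
          sqNorm p L n.1 g ^ p) ^ (1 / p) ≤
        ENNReal.ofReal (C₂ ^ k) *
          (∑ a ∈ Ak, sqNorm p ((N : ℝ) ^ k * L) m (gk a) ^ (2 : ℝ)) ^ (1/2 : ℝ))
    (H3 : ∀ m : ℤ × ℤ, ∀ x : ℝ × ℝ,
      (∑' n : {n : ℤ × ℤ // sqTile ((N : ℝ) ^ k * L) n ⊆ sqTile ((N : ℝ) ^ (k + 1) * L) m},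
          sqWeight ((N : ℝ) ^ k * L) n.1 x) ≤ C₄ * sqWeight ((N : ℝ) ^ (k + 1) * L) m x) :
    ∀ m : ℤ × ℤ,
      (∑' n : {n : ℤ × ℤ // sqTile L n ⊆ sqTile ((N : ℝ) ^ (k + 1) * L) m},
          sqNorm p L n.1 g ^ p) ^ (1 / p) ≤
        ENNReal.ofReal (C₂ ^ (k + 1)) *
          (∑ b ∈ Ak1, sqNorm p ((N : ℝ) ^ (k + 1) * L) m (gk1 b) ^ (2 : ℝ)) ^ (1/2 : ℝ) := by
  intro m
  have hp0 : (0:ℝ) < p := by linarith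
  have hpne : p ≠ 0 := ne_of_gt hp0
  have hN0 : 0 < N := by omega
  have hNkL : (0:ℝ) < (N : ℝ) ^ k * L := by positivity
  -- finiteness of the level-k tiling of the level-(k+1) square
  have hfinT : {n : ℤ × ℤ | sqTile ((N:ℝ)^k * L) n ⊆ sqTile ((N:ℝ)^(k+1) * L) m}.Finite := by
    have h := my_tile_finite hNkL hN0 m
    rwa [show ((N:ℕ) : ℝ) * ((N:ℝ)^k * L) = (N:ℝ)^(k+1) * L by push_cast; ring] at h
  haveI : Fintype {n : ℤ × ℤ // sqTile ((N:ℝ)^k * L) n ⊆ sqTile ((N:ℝ)^(k+1) * L) m} :=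
    hfinT.fintype
  -- basic rpow arithmetic helpers
  have hpow1 : ∀ X : ℝ≥0∞, (X ^ (1/p)) ^ p = X := by
    intro X; rw [← ENNReal.rpow_mul, one_div_mul_cancel hpne, ENNReal.rpow_one]
  have hpow2 : ∀ X : ℝ≥0∞, ((X ^ (1/p)) ^ (2:ℝ)) ^ (p/2) = X := by
    intro X
    rw [← ENNReal.rpow_mul, ← ENNReal.rpow_mul,
      show 1/p * (2 * (p/2)) = 1 by field_simp, ENNReal.rpow_one]
  -- Step A : split the tiling
  have stepA :
      (∑' n : {n : ℤ × ℤ // sqTile L n ⊆ sqTile ((N:ℝ)^(k+1) * L) m}, sqNorm p L n.1 g ^ p)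
        = ∑ m' : {n : ℤ × ℤ // sqTile ((N:ℝ)^k * L) n ⊆ sqTile ((N:ℝ)^(k+1) * L) m},
            ∑' n : {n : ℤ × ℤ // sqTile L n ⊆ sqTile ((N:ℝ)^k * L) m'.1},
              sqNorm p L n.1 g ^ p := by
    calc (∑' n : {n : ℤ × ℤ // sqTile L n ⊆ sqTile ((N:ℝ)^(k+1) * L) m}, sqNorm p L n.1 g ^ p)
        = ∑' x : (Σ m' : {n : ℤ × ℤ // sqTile ((N:ℝ)^k * L) n ⊆ sqTile ((N:ℝ)^(k+1) * L) m},
            {n : ℤ × ℤ // sqTile L n ⊆ sqTile ((N:ℝ)^k * L) m'.1}),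
            sqNorm p L x.2.1 g ^ p := by
          rw [← Equiv.tsum_eq (my_equiv hL hN0 k m).symm
            (fun n : {n : ℤ × ℤ // sqTile L n ⊆ sqTile ((N:ℝ)^(k+1) * L) m} =>
              sqNorm p L n.1 g ^ p)]
          exact tsum_congr fun x => rfl
      _ = _ := by rw [ENNReal.tsum_sigma', tsum_fintype]
  rw [stepA]
  -- Step B : apply H2 on each level-k square
  have stepB : ∀ m' : {n : ℤ × ℤ // sqTile ((N:ℝ)^k * L) n ⊆ sqTile ((N:ℝ)^(k+1) * L) m},
      (∑' n : {n : ℤ × ℤ // sqTile L n ⊆ sqTile ((N:ℝ)^k * L) m'.1}, sqNorm p L n.1 g ^ p)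
        ≤ ENNReal.ofReal (C₂ ^ k) ^ p *
            (∑ a ∈ Ak, sqNorm p ((N:ℝ)^k * L) m'.1 (gk a) ^ (2:ℝ)) ^ (p/2) := by
    intro m'
    calc (∑' n : {n : ℤ × ℤ // sqTile L n ⊆ sqTile ((N:ℝ)^k * L) m'.1}, sqNorm p L n.1 g ^ p)
        = ((∑' n : {n : ℤ × ℤ // sqTile L n ⊆ sqTile ((N:ℝ)^k * L) m'.1},
            sqNorm p L n.1 g ^ p) ^ (1/p)) ^ p := (hpow1 _).symm
      _ ≤ (ENNReal.ofReal (C₂ ^ k) *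
            (∑ a ∈ Ak, sqNorm p ((N:ℝ)^k * L) m'.1 (gk a) ^ (2:ℝ)) ^ (1/2 : ℝ)) ^ p :=
          ENNReal.rpow_le_rpow (H2 m'.1) hp0.le
      _ = _ := by
          rw [ENNReal.mul_rpow_of_nonneg _ _ hp0.le, ← ENNReal.rpow_mul,
            show (1/2 : ℝ) * p = p/2 by ring]
  -- Step D : weight summation for each a
  have stepD : ∀ a ∈ Ak,
      (∑ m' : {n : ℤ × ℤ // sqTile ((N:ℝ)^k * L) n ⊆ sqTile ((N:ℝ)^(k+1) * L) m},
        (sqNorm p ((N:ℝ)^k * L) m'.1 (gk a) ^ (2:ℝ)) ^ (p/2))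
        ≤ ENNReal.ofReal C₄ *
            (sqNorm p ((N:ℝ)^(k+1) * L) m (gk a) ^ (2:ℝ)) ^ (p/2) := by
    intro a _
    have hptop : ENNReal.ofReal C₄ ≠ ⊤ := ENNReal.ofReal_ne_top
    calc (∑ m' : {n : ℤ × ℤ // sqTile ((N:ℝ)^k * L) n ⊆ sqTile ((N:ℝ)^(k+1) * L) m},
          (sqNorm p ((N:ℝ)^k * L) m'.1 (gk a) ^ (2:ℝ)) ^ (p/2))
        = ∑ m' : {n : ℤ × ℤ // sqTile ((N:ℝ)^k * L) n ⊆ sqTile ((N:ℝ)^(k+1) * L) m},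
            ∫⁻ x, (‖gk a x‖₊ : ℝ≥0∞) ^ p * ENNReal.ofReal (sqWeight ((N:ℝ)^k * L) m'.1 x) := by
          refine Finset.sum_congr rfl fun m' _ => ?_
          rw [sqNorm, hpow2]
      _ ≤ ∫⁻ x, ∑ m' : {n : ℤ × ℤ // sqTile ((N:ℝ)^k * L) n ⊆ sqTile ((N:ℝ)^(k+1) * L) m},
            (‖gk a x‖₊ : ℝ≥0∞) ^ p * ENNReal.ofReal (sqWeight ((N:ℝ)^k * L) m'.1 x) :=
          my_sum_lintegral_le _ _
      _ ≤ ∫⁻ x, ENNReal.ofReal C₄ *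
            ((‖gk a x‖₊ : ℝ≥0∞) ^ p * ENNReal.ofReal (sqWeight ((N:ℝ)^(k+1) * L) m x)) := by
          refine lintegral_mono fun x => ?_
          have h3x := H3 m x
          rw [tsum_fintype] at h3x
          calc ∑ m' : {n : ℤ × ℤ // sqTile ((N:ℝ)^k * L) n ⊆ sqTile ((N:ℝ)^(k+1) * L) m},
              (‖gk a x‖₊ : ℝ≥0∞) ^ p * ENNReal.ofReal (sqWeight ((N:ℝ)^k * L) m'.1 x)
              = (‖gk a x‖₊ : ℝ≥0∞) ^ p * ENNReal.ofReal
                  (∑ m' : {n : ℤ × ℤ // sqTile ((N:ℝ)^k * L) n ⊆ sqTile ((N:ℝ)^(k+1) * L) m},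
                    sqWeight ((N:ℝ)^k * L) m'.1 x) := by
                rw [← Finset.mul_sum, ENNReal.ofReal_sum_of_nonneg
                  (fun _ _ => my_sqWeight_nonneg _ _ _)]
            _ ≤ (‖gk a x‖₊ : ℝ≥0∞) ^ p *
                  ENNReal.ofReal (C₄ * sqWeight ((N:ℝ)^(k+1) * L) m x) :=
                mul_le_mul_of_nonneg_left (ENNReal.ofReal_le_ofReal h3x) (zero_le')
            _ = _ := by rw [ENNReal.ofReal_mul hC₄.le]; ring
      _ = ENNReal.ofReal C₄ *
            ∫⁻ x, (‖gk a x‖₊ : ℝ≥0∞) ^ p * ENNReal.ofReal (sqWeight ((N:ℝ)^(k+1) * L) m x) :=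
          lintegral_const_mul' _ _ hptop
      _ = _ := by rw [sqNorm, hpow2]
  -- Step C : Minkowski + Step D
  have hq1 : (1:ℝ) ≤ p/2 := by linarith
  have hqne : p/2 ≠ 0 := by positivity
  have stepCD :
      (∑ m' : {n : ℤ × ℤ // sqTile ((N:ℝ)^k * L) n ⊆ sqTile ((N:ℝ)^(k+1) * L) m},
        (∑ a ∈ Ak, sqNorm p ((N:ℝ)^k * L) m'.1 (gk a) ^ (2:ℝ)) ^ (p/2))
        ≤ ((ENNReal.ofReal C₄) ^ (2/p) *
            ∑ a ∈ Ak, sqNorm p ((N:ℝ)^(k+1) * L) m (gk a) ^ (2:ℝ)) ^ (p/2) := by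
    have h1 := my_minkowski Ak
      (fun a (m' : {n : ℤ × ℤ // sqTile ((N:ℝ)^k * L) n ⊆ sqTile ((N:ℝ)^(k+1) * L) m}) =>
        sqNorm p ((N:ℝ)^k * L) m'.1 (gk a) ^ (2:ℝ)) hq1
    have h2 : ∑ a ∈ Ak, (∑ m' : {n : ℤ × ℤ // sqTile ((N:ℝ)^k * L) n ⊆
          sqTile ((N:ℝ)^(k+1) * L) m},
          (sqNorm p ((N:ℝ)^k * L) m'.1 (gk a) ^ (2:ℝ)) ^ (p/2)) ^ (1/(p/2))
        ≤ (ENNReal.ofReal C₄) ^ (2/p) *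
            ∑ a ∈ Ak, sqNorm p ((N:ℝ)^(k+1) * L) m (gk a) ^ (2:ℝ) := by
      rw [Finset.mul_sum]
      refine Finset.sum_le_sum fun a ha => ?_
      calc (∑ m' : {n : ℤ × ℤ // sqTile ((N:ℝ)^k * L) n ⊆ sqTile ((N:ℝ)^(k+1) * L) m},
            (sqNorm p ((N:ℝ)^k * L) m'.1 (gk a) ^ (2:ℝ)) ^ (p/2)) ^ (1/(p/2))
          ≤ (ENNReal.ofReal C₄ *
              (sqNorm p ((N:ℝ)^(k+1) * L) m (gk a) ^ (2:ℝ)) ^ (p/2)) ^ (1/(p/2)) :=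
            ENNReal.rpow_le_rpow (stepD a ha) (by positivity)
        _ = (ENNReal.ofReal C₄) ^ (2/p) *
              sqNorm p ((N:ℝ)^(k+1) * L) m (gk a) ^ (2:ℝ) := by
            rw [ENNReal.mul_rpow_of_nonneg _ _ (by positivity : (0:ℝ) ≤ 1/(p/2)),
              ← ENNReal.rpow_mul, show p/2 * (1/(p/2)) = 1 by field_simp, ENNReal.rpow_one,
                            one_div_div]
    have h3 := le_trans h1 h2
    calc (∑ m' : {n : ℤ × ℤ // sqTile ((N:ℝ)^k * L) n ⊆ sqTile ((N:ℝ)^(k+1) * L) m},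
          (∑ a ∈ Ak, sqNorm p ((N:ℝ)^k * L) m'.1 (gk a) ^ (2:ℝ)) ^ (p/2))
        = ((∑ m' : {n : ℤ × ℤ // sqTile ((N:ℝ)^k * L) n ⊆ sqTile ((N:ℝ)^(k+1) * L) m},
            (∑ a ∈ Ak, sqNorm p ((N:ℝ)^k * L) m'.1 (gk a) ^ (2:ℝ)) ^ (p/2)) ^ (1/(p/2)))
              ^ (p/2) := by
          rw [← ENNReal.rpow_mul, one_div_mul_cancel hqne, ENNReal.rpow_one]
      _ ≤ _ := ENNReal.rpow_le_rpow h3 (by positivity)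
  -- Step F : apply H1 and regroup fibers
  have stepF : ∑ a ∈ Ak, sqNorm p ((N:ℝ)^(k+1) * L) m (gk a) ^ (2:ℝ)
      ≤ ENNReal.ofReal C₃ * ∑ b ∈ Ak1, sqNorm p ((N:ℝ)^(k+1) * L) m (gk1 b) ^ (2:ℝ) := by
    calc ∑ a ∈ Ak, sqNorm p ((N:ℝ)^(k+1) * L) m (gk a) ^ (2:ℝ)
        ≤ ∑ a ∈ Ak, ENNReal.ofReal C₃ * ∑ b ∈ Ak1.filter (fun b => π b = a),
            sqNorm p ((N:ℝ)^(k+1) * L) m (gk1 b) ^ (2:ℝ) :=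
          Finset.sum_le_sum fun a ha => H1 a ha m
      _ = ENNReal.ofReal C₃ * ∑ a ∈ Ak, ∑ b ∈ Ak1.filter (fun b => π b = a),
            sqNorm p ((N:ℝ)^(k+1) * L) m (gk1 b) ^ (2:ℝ) := by rw [Finset.mul_sum]
      _ = _ := by
          rw [Finset.sum_fiberwise_of_maps_to hπ]
  -- assemble everything
  calc (∑ m' : {n : ℤ × ℤ // sqTile ((N:ℝ)^k * L) n ⊆ sqTile ((N:ℝ)^(k+1) * L) m},
        ∑' n : {n : ℤ × ℤ // sqTile L n ⊆ sqTile ((N:ℝ)^k * L) m'.1},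
          sqNorm p L n.1 g ^ p) ^ (1/p)
      ≤ (∑ m' : {n : ℤ × ℤ // sqTile ((N:ℝ)^k * L) n ⊆ sqTile ((N:ℝ)^(k+1) * L) m},
          ENNReal.ofReal (C₂ ^ k) ^ p *
            (∑ a ∈ Ak, sqNorm p ((N:ℝ)^k * L) m'.1 (gk a) ^ (2:ℝ)) ^ (p/2)) ^ (1/p) :=
        ENNReal.rpow_le_rpow (Finset.sum_le_sum fun m' _ => stepB m') (by positivity)
    _ = (ENNReal.ofReal (C₂ ^ k) ^ p *
          ∑ m' : {n : ℤ × ℤ // sqTile ((N:ℝ)^k * L) n ⊆ sqTile ((N:ℝ)^(k+1) * L) m},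
            (∑ a ∈ Ak, sqNorm p ((N:ℝ)^k * L) m'.1 (gk a) ^ (2:ℝ)) ^ (p/2)) ^ (1/p) := by
        rw [Finset.mul_sum]
    _ ≤ (ENNReal.ofReal (C₂ ^ k) ^ p *
          ((ENNReal.ofReal C₄) ^ (2/p) *
            (ENNReal.ofReal C₃ *
              ∑ b ∈ Ak1, sqNorm p ((N:ℝ)^(k+1) * L) m (gk1 b) ^ (2:ℝ))) ^ (p/2)) ^ (1/p) := by
        refine ENNReal.rpow_le_rpow (mul_le_mul_of_nonneg_left ?_ (zero_le' )) (by positivity)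
        refine le_trans stepCD (ENNReal.rpow_le_rpow (mul_le_mul_of_nonneg_left stepF (zero_le' )) (by positivity))
    _ = ENNReal.ofReal (C₂ ^ (k+1)) *
          (∑ b ∈ Ak1, sqNorm p ((N:ℝ)^(k+1) * L) m (gk1 b) ^ (2:ℝ)) ^ (1/2 : ℝ) := by
        have hC₂0 : 0 ≤ C₂ := by rw [hC₂]; positivity
        have e1 : (ENNReal.ofReal (C₂^k) ^ p) ^ (1/p) = ENNReal.ofReal (C₂^k) := by
          rw [← ENNReal.rpow_mul, mul_one_div_cancel hpne, ENNReal.rpow_one]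
        have e2 : (((ENNReal.ofReal C₄) ^ (2/p) * (ENNReal.ofReal C₃ *
              ∑ b ∈ Ak1, sqNorm p ((N:ℝ)^(k+1) * L) m (gk1 b) ^ (2:ℝ))) ^ (p/2)) ^ (1/p)
            = (ENNReal.ofReal C₄) ^ (1/p) * ((ENNReal.ofReal C₃) ^ (1/2 : ℝ) *
              (∑ b ∈ Ak1, sqNorm p ((N:ℝ)^(k+1) * L) m (gk1 b) ^ (2:ℝ)) ^ (1/2 : ℝ)) := by
          rw [← ENNReal.rpow_mul, show p/2 * (1/p) = (1/2:ℝ) by field_simp,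
            ENNReal.mul_rpow_of_nonneg _ _ (by norm_num : (0:ℝ) ≤ 1/2),
            ENNReal.mul_rpow_of_nonneg _ _ (by norm_num : (0:ℝ) ≤ 1/2),
            ← ENNReal.rpow_mul, show (2/p) * (1/2:ℝ) = 1/p by ring]
        have e3 : ENNReal.ofReal (C₂ ^ (k+1)) = ENNReal.ofReal (C₂^k) *
            ((ENNReal.ofReal C₃) ^ (1/2 : ℝ) * (ENNReal.ofReal C₄) ^ (1/p)) := by
          rw [pow_succ, ENNReal.ofReal_mul (pow_nonneg hC₂0 k)]
          congr 1
          rw [hC₂, ENNReal.ofReal_mul (Real.rpow_nonneg hC₃.le _),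
            ENNReal.ofReal_rpow_of_pos hC₃, ENNReal.ofReal_rpow_of_pos hC₄]
        rw [ENNReal.mul_rpow_of_nonneg _ _ (by positivity : (0:ℝ) ≤ 1/p), e1, e2, e3]
        ring
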